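/- Let V(x) = log(1 + e^{-x}) be the logistic loss, σ ≥ 0, β > 0, and Z a standard normal random variable. Define φ(r) = E[V(r + σ√r · Z)] and h(r) = φ(r) + β r for r ≥ 0. If σ² < -4 + 2√6 and β < 1/2 - σ²/8, then h admits a unique minimizer r⋆ on [0, ∞), and r⋆ > 0. -/

import Mathlib

open MeasureTheory ProbabilityTheory Real Filter Topology Set
open scoped NNReal ENNReal

noncomputable section

namespace Stmt2Aux

/-- logistic loss -/
def V0 (x : ℝ) : ℝ := Real.log (1 + Real.exp (-x))
def V1 (x : ℝ) : ℝ := -Real.exp (-x) / (1 + Real.exp (-x))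
def V2 (x : ℝ) : ℝ := Real.exp (-x) / (1 + Real.exp (-x)) ^ 2
def V3 (x : ℝ) : ℝ := Real.exp (-x) * (Real.exp (-x) - 1) / (1 + Real.exp (-x)) ^ 3
def V4 (x : ℝ) : ℝ :=
  Real.exp (-x) * ((Real.exp (-x)) ^ 2 - 4 * Real.exp (-x) + 1) / (1 + Real.exp (-x)) ^ 4

lemma epos (x : ℝ) : 0 < Real.exp (-x) := Real.exp_pos _
lemma onep (x : ℝ) : 0 < 1 + Real.exp (-x) := by positivity

lemma hasDerivAt_exp_neg (x : ℝ) :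
    HasDerivAt (fun y : ℝ => Real.exp (-y)) (-Real.exp (-x)) x := by
  simpa using ((hasDerivAt_id x).neg.exp)

lemma hasDerivAt_V0 (x : ℝ) : HasDerivAt V0 (V1 x) x := by
  have h1 : HasDerivAt (fun y : ℝ => 1 + Real.exp (-y)) (-Real.exp (-x)) x :=
    (hasDerivAt_exp_neg x).const_add 1
  have := (h1.log (onep x).ne')
  exact this

lemma hasDerivAt_V1 (x : ℝ) : HasDerivAt V1 (V2 x) x := by
  have h1 : HasDerivAt (fun y : ℝ => -Real.exp (-y)) (Real.exp (-x)) x := by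
    simpa using (hasDerivAt_exp_neg x).fun_neg
  have h2 : HasDerivAt (fun y : ℝ => 1 + Real.exp (-y)) (-Real.exp (-x)) x :=
    (hasDerivAt_exp_neg x).const_add 1
  have := h1.fun_div h2 (onep x).ne'
  refine this.congr_deriv ?_
  have h := (onep x).ne'
  rw [V2]
  field_simp
  ring

lemma hasDerivAt_V2 (x : ℝ) : HasDerivAt V2 (V3 x) x := by
  have h1 : HasDerivAt (fun y : ℝ => Real.exp (-y)) (-Real.exp (-x)) x := hasDerivAt_exp_neg x
  have h2 : HasDerivAt (fun y : ℝ => (1 + Real.exp (-y)) ^ 2)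
      (2 * (1 + Real.exp (-x)) ^ 1 * -Real.exp (-x)) x := by
    simpa using ((hasDerivAt_exp_neg x).const_add 1).fun_pow 2
  have := h1.fun_div h2 (by positivity)
  refine this.congr_deriv ?_
  have h := (onep x).ne'
  rw [V3]
  field_simp
  ring

lemma hasDerivAt_V3 (x : ℝ) : HasDerivAt V3 (V4 x) x := by
  have h1 : HasDerivAt (fun y : ℝ => Real.exp (-y) * (Real.exp (-y) - 1))
      (-Real.exp (-x) * (Real.exp (-x) - 1) + Real.exp (-x) * -Real.exp (-x)) x :=
    (hasDerivAt_exp_neg x).mul ((hasDerivAt_exp_neg x).sub_const 1)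
  have h2 : HasDerivAt (fun y : ℝ => (1 + Real.exp (-y)) ^ 3)
      (3 * (1 + Real.exp (-x)) ^ 2 * -Real.exp (-x)) x := by
    simpa using ((hasDerivAt_exp_neg x).const_add 1).fun_pow 3
  have := h1.fun_div h2 (by positivity)
  refine this.congr_deriv ?_
  have h := (onep x).ne'
  rw [V4]
  field_simp
  ring

lemma V0_nonneg (x : ℝ) : 0 ≤ V0 x := by
  have : (1:ℝ) ≤ 1 + Real.exp (-x) := by linarith [epos x]
  exact Real.log_nonneg this

lemma V0_le (x : ℝ) : V0 x ≤ Real.log 2 + |x| := by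
  have h1 : Real.exp (-x) ≤ Real.exp |x| := Real.exp_le_exp.2 (neg_le_abs x)
  have h2 : (1:ℝ) ≤ Real.exp |x| := Real.one_le_exp (abs_nonneg x)
  have h3 : 1 + Real.exp (-x) ≤ 2 * Real.exp |x| := by linarith
  calc V0 x ≤ Real.log (2 * Real.exp |x|) := Real.log_le_log (onep x) h3
    _ = Real.log 2 + |x| := by rw [Real.log_mul (by norm_num) (Real.exp_pos _).ne',
        Real.log_exp]

lemma abs_V0_le (x : ℝ) : |V0 x| ≤ Real.log 2 + |x| := by
  rw [abs_of_nonneg (V0_nonneg x)]; exact V0_le x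

lemma abs_V1_le (x : ℝ) : |V1 x| ≤ 1 := by
  have he := epos x
  rw [V1, abs_div, abs_of_pos (onep x), abs_of_neg (by linarith : -Real.exp (-x) < 0),
    div_le_one (onep x)]
  linarith

lemma V2_pos (x : ℝ) : 0 < V2 x := by
  have he := epos x
  have h1 := onep x
  rw [V2]
  positivity

lemma abs_V2_le (x : ℝ) : |V2 x| ≤ 1 := by
  have he := epos x
  rw [abs_of_pos (V2_pos x), V2, div_le_one (by positivity)]
  nlinarith

lemma abs_V3_le (x : ℝ) : |V3 x| ≤ 1 := by
  have he := epos x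
  rw [V3, abs_div, abs_of_pos (by positivity : (0:ℝ) < (1 + Real.exp (-x)) ^ 3),
    div_le_one (by positivity)]
  rw [abs_mul, abs_of_pos he]
  rcases abs_cases (Real.exp (-x) - 1) with ⟨h, _⟩ | ⟨h, _⟩ <;> rw [h] <;>
    nlinarith [mul_pos he he, mul_pos (mul_pos he he) he]

lemma abs_V4_le (x : ℝ) : |V4 x| ≤ 1 := by
  have he := epos x
  rw [V4, abs_div, abs_of_pos (by positivity : (0:ℝ) < (1 + Real.exp (-x)) ^ 4),
    div_le_one (by positivity)]
  rw [abs_mul, abs_of_pos he]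
  rcases abs_cases ((Real.exp (-x)) ^ 2 - 4 * Real.exp (-x) + 1) with ⟨h, _⟩ | ⟨h, _⟩ <;>
    rw [h] <;>
    nlinarith [mul_pos he he, mul_pos (mul_pos he he) he,
      mul_pos (mul_pos (mul_pos he he) he) he]

/-- pointwise positivity of the convexity combination -/
lemma key_pos {c : ℝ} (hc : 0 ≤ c) (hc2 : c < -4 + 2 * Real.sqrt 6) (x : ℝ) :
    0 < V2 x + c * V3 x + c ^ 2 / 4 * V4 x := by
  have he := epos x
  set e := Real.exp (-x) with he_def
  have hone : (0:ℝ) < 1 + e := by linarith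
  have hsq : (2 * Real.sqrt 6) ^ 2 = 24 := by
    rw [mul_pow, sq_sqrt (by norm_num : (6:ℝ) ≥ 0)]; norm_num
  have hc8 : c ^ 2 + 8 * c - 8 < 0 := by
    nlinarith [Real.sqrt_nonneg 6, sq_nonneg (c + 4 - 2 * Real.sqrt 6)]
  have hP : 0 < (1 + e) ^ 2 + c * (e ^ 2 - 1) + c ^ 2 * (e ^ 2 - 4 * e + 1) / 4 := by
    nlinarith [sq_nonneg (e - 1), mul_nonneg hc he.le, mul_pos he hone,
      mul_nonneg (mul_nonneg hc hc) (sq_nonneg (e - 1)),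
      mul_nonneg (mul_nonneg hc he.le) hone.le]
  have hexp : V2 x + c * V3 x + c ^ 2 / 4 * V4 x
      = e * ((1 + e) ^ 2 + c * (e ^ 2 - 1) + c ^ 2 * (e ^ 2 - 4 * e + 1) / 4) / (1 + e) ^ 4 := by
    rw [V2, V3, V4, ← he_def]
    field_simp
    ring
  rw [hexp]
  positivity

def γ : Measure ℝ := gaussianReal 0 1

instance : IsProbabilityMeasure γ := by unfold γ; infer_instance

def Eg (z : ℝ) : ℝ := Real.exp (-z ^ 2 / 2)

lemma Eg_pos (z : ℝ) : 0 < Eg z := Real.exp_pos _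

lemma pdf_eq (z : ℝ) : gaussianPDFReal 0 1 z = (Real.sqrt (2 * π))⁻¹ * Eg z := by
  rw [gaussianPDFReal, Eg]
  norm_num

lemma integral_gauss (f : ℝ → ℝ) :
    ∫ z, f z ∂γ = (Real.sqrt (2 * π))⁻¹ * ∫ z, f z * Eg z := by
  have hmeas : Measurable fun x => Real.toNNReal (gaussianPDFReal 0 1 x) :=
    (measurable_gaussianPDFReal 0 1).real_toNNReal
  have hγ : γ = volume.withDensity
      (fun x => ((Real.toNNReal (gaussianPDFReal 0 1 x) : ℝ≥0) : ℝ≥0∞)) := by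
    rw [γ, gaussianReal_of_var_ne_zero 0 one_ne_zero]
    rfl
  rw [hγ, integral_withDensity_eq_integral_smul hmeas]
  rw [← integral_const_mul]
  congr 1
  ext z
  rw [NNReal.smul_def, Real.coe_toNNReal _ (gaussianPDFReal_nonneg 0 1 z), pdf_eq,
    smul_eq_mul]
  ring

lemma integrable_gauss_iff (f : ℝ → ℝ) :
    Integrable f γ ↔ Integrable (fun z => f z * Eg z) volume := by
  have hγ : γ = volume.withDensity (gaussianPDF 0 1) := by
    rw [γ, gaussianReal_of_var_ne_zero 0 one_ne_zero]
  rw [hγ, integrable_withDensity_iff (measurable_gaussianPDF 0 1)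
    (ae_of_all _ fun x => ENNReal.ofReal_lt_top)]
  have hpt : ∀ z : ℝ, f z * (gaussianPDF 0 1 z).toReal
      = (Real.sqrt (2 * π))⁻¹ * (f z * Eg z) := by
    intro z
    rw [gaussianPDF, ENNReal.toReal_ofReal (gaussianPDFReal_nonneg 0 1 z), pdf_eq]
    ring
  simp_rw [hpt]
  have hc : (Real.sqrt (2 * π))⁻¹ ≠ 0 := by
    positivity
  constructor
  · intro hi
    have := hi.const_mul (Real.sqrt (2 * π))
    refine this.congr (ae_of_all _ fun z => ?_)
    field_simp
  · intro hi
    exact hi.const_mul _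

lemma int_exp_vol : Integrable (fun z : ℝ => Eg z) volume := by
  have h : ∀ z : ℝ, -z ^ 2 / 2 = -(1 / 2) * z ^ 2 := fun z => by ring
  unfold Eg
  simp_rw [h]
  exact integrable_exp_neg_mul_sq (by norm_num)

lemma int_abs_exp_vol : Integrable (fun z : ℝ => |z| * Eg z) volume := by
  have h : ∀ z : ℝ, -z ^ 2 / 2 = -(1 / 2) * z ^ 2 := fun z => by ring
  unfold Eg
  simp_rw [h]
  have := (integrable_mul_exp_neg_mul_sq (b := 1 / 2) (by norm_num)).abs
  refine this.congr (ae_of_all _ fun z => ?_)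
  simp [abs_mul, Real.abs_exp]

lemma int_sq_exp_vol : Integrable (fun z : ℝ => z ^ 2 * Eg z) volume := by
  have h : ∀ z : ℝ, -z ^ 2 / 2 = -(1 / 2) * z ^ 2 := fun z => by ring
  unfold Eg
  simp_rw [h]
  have := integrable_rpow_mul_exp_neg_mul_sq (b := 1 / 2) (by norm_num)
    (s := (2 : ℝ)) (by norm_num)
  have h2 : ∀ x : ℝ, x ^ (2:ℝ) = x ^ (2:ℕ) := fun x => by
    rw [show (2:ℝ) = ((2:ℕ):ℝ) by norm_num, Real.rpow_natCast]
  simp_rw [h2] at this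
  exact this

lemma integrable_quad_vol (A B C : ℝ) :
    Integrable (fun z : ℝ => (A + B * |z| + C * z ^ 2) * Eg z) volume := by
  have : Integrable (fun z : ℝ =>
      A * Eg z + B * (|z| * Eg z) + C * (z ^ 2 * Eg z)) volume :=
    ((int_exp_vol.const_mul A).add (int_abs_exp_vol.const_mul B)).add
      (int_sq_exp_vol.const_mul C)
  exact this.congr (ae_of_all _ fun z => by ring)

lemma integrable_quad_gauss (A B C : ℝ) :
    Integrable (fun z : ℝ => A + B * |z| + C * z ^ 2) γ := by
  rw [integrable_gauss_iff]
  exact integrable_quad_vol A B C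

lemma integrable_gauss_of_le (f : ℝ → ℝ) (hf : AEStronglyMeasurable f γ)
    (A B C : ℝ) (hb : ∀ z, |f z| ≤ A + B * |z| + C * z ^ 2) : Integrable f γ :=
  (integrable_quad_gauss A B C).mono' hf
    (ae_of_all _ fun z => by simpa [Real.norm_eq_abs] using hb z)

lemma tendsto_linear_exp_atTop (A B : ℝ) :
    Tendsto (fun s : ℝ => (A + B * s) * Real.exp (-s ^ 2 / 2)) atTop (𝓝 0) := by
  have t1 : Tendsto (fun s : ℝ => Real.exp (-s ^ 2 / 2)) atTop (𝓝 0) := by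
    apply Real.tendsto_exp_atBot.comp
    have h : Tendsto (fun s : ℝ => s ^ 2 / 2) atTop atTop :=
      (tendsto_pow_atTop two_ne_zero).atTop_div_const (by norm_num)
    have h2 := tendsto_neg_atTop_atBot.comp h
    refine h2.congr fun s => ?_
    simp only [Function.comp_apply, neg_div]
  have t2 : Tendsto (fun s : ℝ => s * Real.exp (-s ^ 2 / 2)) atTop (𝓝 0) := by
    have th : Tendsto (fun s : ℝ => Real.exp (1 / 2) * (s * Real.exp (-s))) atTop (𝓝 0) := by
      have := tendsto_pow_mul_exp_neg_atTop_nhds_zero 1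
      simp only [pow_one] at this
      simpa using this.const_mul (Real.exp (1 / 2))
    apply tendsto_of_tendsto_of_tendsto_of_le_of_le' tendsto_const_nhds th
    · filter_upwards [eventually_ge_atTop (0 : ℝ)] with s hs
      positivity
    · filter_upwards [eventually_ge_atTop (0 : ℝ)] with s hs
      have hle : -s ^ 2 / 2 ≤ 1 / 2 + -s := by nlinarith [sq_nonneg (s - 1)]
      calc s * Real.exp (-s ^ 2 / 2) ≤ s * Real.exp (1 / 2 + -s) :=
            mul_le_mul_of_nonneg_left (Real.exp_le_exp.2 hle) hs
        _ = Real.exp (1 / 2) * (s * Real.exp (-s)) := by rw [Real.exp_add]; ring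
  have := (t1.const_mul A).add (t2.const_mul B)
  simp only [mul_zero, add_zero] at this
  exact this.congr fun s => by ring

lemma tendsto_linear_Eg (A B : ℝ) {l : Filter ℝ} (hl : Tendsto (abs : ℝ → ℝ) l atTop) :
    Tendsto (fun z : ℝ => (A + B * |z|) * Eg z) l (𝓝 0) := by
  have := (tendsto_linear_exp_atTop A B).comp hl
  refine this.congr fun z => ?_
  simp only [Function.comp_apply, Eg, sq_abs]

lemma continuous_Eg : Continuous Eg :=
  Real.continuous_exp.comp ((continuous_pow 2).neg.div_const 2)

lemma hasDerivAt_Eg (z : ℝ) : HasDerivAt Eg (-z * Eg z) z := by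
  have h1 : HasDerivAt (fun z : ℝ => -z ^ 2 / 2) (-z) z := by
    have := ((hasDerivAt_pow 2 z).neg.div_const 2)
    refine HasDerivAt.congr_deriv this (by push_cast; ring)
  show HasDerivAt (fun z => Real.exp (-z ^ 2 / 2)) _ z
  simpa [Eg, mul_comm] using h1.exp

/-- Gaussian integration by parts (Stein identity). -/
lemma gauss_ibp (g g' : ℝ → ℝ) (hg : ∀ z, HasDerivAt g (g' z) z) (hg'c : Continuous g')
    (A B : ℝ) (hgb : ∀ z, |g z| ≤ A + B * |z|) (hg'b : ∀ z, |g' z| ≤ A + B * |z|) :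
    ∫ z, z * g z ∂γ = ∫ z, g' z ∂γ := by
  have hgc : Continuous g := by
    rw [continuous_iff_continuousAt]; exact fun x => (hg x).continuousAt
  set F : ℝ → ℝ := fun z => -g z * Eg z with hF_def
  have hF : ∀ z, HasDerivAt F ((z * g z - g' z) * Eg z) z := by
    intro z
    exact ((hg z).fun_neg.mul (hasDerivAt_Eg z)).congr_deriv (by ring)
  have habs : ∀ z, |F z| ≤ (A + B * |z|) * Eg z := by
    intro z
    rw [hF_def]
    simp only [abs_mul, abs_neg, abs_of_pos (Eg_pos z)]
    exact mul_le_mul_of_nonneg_right (hgb z) (Eg_pos z).le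
  have hF_top : Tendsto F atTop (𝓝 0) := by
    have hb_top := tendsto_linear_Eg A B tendsto_abs_atTop_atTop
    exact tendsto_of_tendsto_of_tendsto_of_le_of_le (by simpa using hb_top.neg) hb_top
      (fun z => neg_le_of_abs_le (habs z)) (fun z => le_of_abs_le (habs z))
  have hF_bot : Tendsto F atBot (𝓝 0) := by
    have hb_bot := tendsto_linear_Eg A B tendsto_abs_atBot_atTop
    exact tendsto_of_tendsto_of_tendsto_of_le_of_le (by simpa using hb_bot.neg) hb_bot
      (fun z => neg_le_of_abs_le (habs z)) (fun z => le_of_abs_le (habs z))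
  have hI2 : Integrable (fun z => z * g z * Eg z) volume := by
    refine (integrable_quad_vol 0 A B).mono'
      ((continuous_id.mul hgc).mul continuous_Eg).aestronglyMeasurable
      (ae_of_all _ fun z => ?_)
    rw [Real.norm_eq_abs, abs_mul, abs_mul, abs_of_pos (Eg_pos z)]
    refine mul_le_mul_of_nonneg_right ?_ (Eg_pos z).le
    calc |z| * |g z| ≤ |z| * (A + B * |z|) :=
          mul_le_mul_of_nonneg_left (hgb z) (abs_nonneg z)
      _ = 0 + A * |z| + B * z ^ 2 := by rw [← sq_abs]; ring
  have hI3 : Integrable (fun z => g' z * Eg z) volume := by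
    refine (integrable_quad_vol A B 0).mono'
      (hg'c.mul continuous_Eg).aestronglyMeasurable (ae_of_all _ fun z => ?_)
    rw [Real.norm_eq_abs, abs_mul, abs_of_pos (Eg_pos z)]
    refine mul_le_mul_of_nonneg_right ?_ (Eg_pos z).le
    calc |g' z| ≤ A + B * |z| := hg'b z
      _ ≤ A + B * |z| + 0 * z ^ 2 := by ring_nf; exact le_refl _
  have hI1 : Integrable (fun z => (z * g z - g' z) * Eg z) volume :=
    (hI2.sub hI3).congr (ae_of_all _ fun z => by simp only [Pi.sub_apply]; ring)
  have hIoi : ∫ z in Set.Ioi (0:ℝ), (z * g z - g' z) * Eg z = 0 - F 0 :=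
    integral_Ioi_of_hasDerivAt_of_tendsto' (fun x _ => hF x) hI1.integrableOn hF_top
  have hIic : ∫ z in Set.Iic (0:ℝ), (z * g z - g' z) * Eg z = F 0 - 0 :=
    integral_Iic_of_hasDerivAt_of_tendsto' (fun x _ => hF x) hI1.integrableOn hF_bot
  have hsum := intervalIntegral.integral_Iic_add_Ioi (b := (0:ℝ)) (μ := volume)
    (f := fun z => (z * g z - g' z) * Eg z) hI1.integrableOn hI1.integrableOn
  have hzero : ∫ z : ℝ, (z * g z - g' z) * Eg z = 0 := by
    rw [← hsum, hIoi, hIic]; ring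
  have hdiff : (∫ z : ℝ, z * g z * Eg z) - ∫ z : ℝ, g' z * Eg z = 0 := by
    rw [← integral_sub hI2 hI3, ← hzero]
    exact integral_congr_ae (ae_of_all _ fun z => by ring)
  rw [integral_gauss (fun z => z * g z), integral_gauss g']
  rw [sub_eq_zero] at hdiff
  rw [hdiff]


/-! ### The function φ and its derivatives -/

def W (σ r z : ℝ) : ℝ := r + σ * Real.sqrt r * z

def phi (σ r : ℝ) : ℝ := ∫ z, V0 (W σ r z) ∂γ

def D1 (σ r : ℝ) : ℝ := ∫ z, V1 (W σ r z) * (1 + σ / (2 * Real.sqrt r) * z) ∂γ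

def D2I (σ r : ℝ) : ℝ :=
  ∫ z, (V2 (W σ r z) + σ ^ 2 * V3 (W σ r z) + σ ^ 4 / 4 * V4 (W σ r z)) ∂γ

lemma continuous_V0 : Continuous V0 := by
  rw [continuous_iff_continuousAt]; exact fun x => (hasDerivAt_V0 x).continuousAt

lemma continuous_V1 : Continuous V1 := by
  rw [continuous_iff_continuousAt]; exact fun x => (hasDerivAt_V1 x).continuousAt

lemma continuous_V2 : Continuous V2 := by
  rw [continuous_iff_continuousAt]; exact fun x => (hasDerivAt_V2 x).continuousAt

lemma continuous_V3 : Continuous V3 := by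
  rw [continuous_iff_continuousAt]; exact fun x => (hasDerivAt_V3 x).continuousAt

lemma continuous_V4 : Continuous V4 := by
  unfold V4
  refine Continuous.div (by continuity) (by continuity) (fun x => ?_)
  have := epos x
  positivity

lemma continuous_W (σ r : ℝ) : Continuous (fun z => W σ r z) := by
  unfold W; continuity

lemma continuous_W_r (σ z : ℝ) : Continuous (fun r => W σ r z) := by
  unfold W
  exact continuous_id.add ((continuous_const.mul Real.continuous_sqrt).mul continuous_const)

/-- derivative of `r ↦ W σ r z` -/
lemma hasDerivAt_W (σ z : ℝ) {r : ℝ} (hr : 0 < r) :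
    HasDerivAt (fun r => W σ r z) (1 + σ / (2 * Real.sqrt r) * z) r := by
  have hs : Real.sqrt r ≠ 0 := (Real.sqrt_pos.2 hr).ne'
  have h1 := (((Real.hasDerivAt_sqrt hr.ne').const_mul σ).mul_const z).const_add r
  have h2 : HasDerivAt (fun y : ℝ => y) (1:ℝ) r := hasDerivAt_id r
  have h3 := h2.add (((Real.hasDerivAt_sqrt hr.ne').const_mul σ).mul_const z)
  refine HasDerivAt.congr_deriv (by exact h3) ?_
  field_simp

/-- derivative of `r ↦ σ/(2√r) * z` -/
lemma hasDerivAt_az (σ z : ℝ) {r : ℝ} (hr : 0 < r) :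
    HasDerivAt (fun r => σ / (2 * Real.sqrt r) * z)
      (-(σ * z) / (4 * r * Real.sqrt r)) r := by
  have hs : 0 < Real.sqrt r := Real.sqrt_pos.2 hr
  have hsq : Real.sqrt r ^ 2 = r := Real.sq_sqrt hr.le
  have h1 : HasDerivAt (fun x : ℝ => (Real.sqrt x)⁻¹)
      (-(1 / (2 * Real.sqrt r)) / Real.sqrt r ^ 2) r :=
    (Real.hasDerivAt_sqrt hr.ne').inv hs.ne'
  have h2 := h1.const_mul (σ * z / 2)
  have h3 : HasDerivAt (fun r => σ / (2 * Real.sqrt r) * z)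
      (σ * z / 2 * (-(1 / (2 * Real.sqrt r)) / Real.sqrt r ^ 2)) r := by
    refine h2.congr_of_eventuallyEq (Filter.Eventually.of_forall fun y => ?_)
    show σ / (2 * Real.sqrt y) * z = σ * z / 2 * (Real.sqrt y)⁻¹
    simp only [div_eq_mul_inv, mul_inv]
    ring
  refine h3.congr_deriv ?_
  rw [hsq]
  simp only [div_eq_mul_inv, mul_inv, one_mul, neg_mul, mul_neg, neg_inj]
  ring

/-- derivative of `r ↦ V0 (W σ r z)` -/
lemma hasDerivAt_V0W (σ z : ℝ) {r : ℝ} (hr : 0 < r) :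
    HasDerivAt (fun r => V0 (W σ r z))
      (V1 (W σ r z) * (1 + σ / (2 * Real.sqrt r) * z)) r := by
  have := (hasDerivAt_V0 (W σ r z)).comp r (hasDerivAt_W σ z hr)
  simpa [Function.comp_def] using this

/-- derivative of `r ↦ V1 (W σ r z) * (1 + σ/(2√r) z)` -/
lemma hasDerivAt_D1int (σ z : ℝ) {r : ℝ} (hr : 0 < r) :
    HasDerivAt (fun r => V1 (W σ r z) * (1 + σ / (2 * Real.sqrt r) * z))
      (V2 (W σ r z) * (1 + σ / (2 * Real.sqrt r) * z) ^ 2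
        + V1 (W σ r z) * (-(σ * z) / (4 * r * Real.sqrt r))) r := by
  have hV1W : HasDerivAt (fun r => V1 (W σ r z))
      (V2 (W σ r z) * (1 + σ / (2 * Real.sqrt r) * z)) r := by
    have := (hasDerivAt_V1 (W σ r z)).comp r (hasDerivAt_W σ z hr)
    simpa [Function.comp_def] using this
  have hA : HasDerivAt (fun r => 1 + σ / (2 * Real.sqrt r) * z)
      (-(σ * z) / (4 * r * Real.sqrt r)) r := (hasDerivAt_az σ z hr).const_add 1
  have := hV1W.mul hA
  refine this.congr_deriv ?_
  ring


lemma mem_ball_facts {r₀ x : ℝ} (hr : 0 < r₀) (hx : x ∈ Metric.ball r₀ (r₀ / 2)) :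
    r₀ / 2 < x ∧ 0 < x := by
  rw [Metric.mem_ball, Real.dist_eq] at hx
  have := abs_lt.1 hx
  constructor <;> linarith [this.1, this.2]

lemma int_VkW (σ r : ℝ) (Vk : ℝ → ℝ) (hc : Continuous Vk) (hb : ∀ x, |Vk x| ≤ 1) :
    Integrable (fun z => Vk (W σ r z)) γ := by
  refine integrable_gauss_of_le _ ((hc.comp (continuous_W σ r)).aestronglyMeasurable)
    1 0 0 (fun z => ?_)
  simpa using hb (W σ r z)

lemma int_zVkW (σ r : ℝ) (Vk : ℝ → ℝ) (hc : Continuous Vk) (hb : ∀ x, |Vk x| ≤ 1) :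
    Integrable (fun z => z * Vk (W σ r z)) γ := by
  refine integrable_gauss_of_le _
    ((continuous_id.mul (hc.comp (continuous_W σ r))).aestronglyMeasurable)
    0 1 0 (fun z => ?_)
  have h1 : |z * Vk (W σ r z)| ≤ |z| := by
    rw [abs_mul]
    calc |z| * |Vk (W σ r z)| ≤ |z| * 1 :=
          mul_le_mul_of_nonneg_left (hb _) (abs_nonneg z)
      _ = |z| := mul_one _
  nlinarith [sq_nonneg z]

lemma int_zzVkW (σ r : ℝ) (Vk : ℝ → ℝ) (hc : Continuous Vk) (hb : ∀ x, |Vk x| ≤ 1) :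
    Integrable (fun z => z * (z * Vk (W σ r z))) γ := by
  refine integrable_gauss_of_le _
    ((continuous_id.mul (continuous_id.mul (hc.comp (continuous_W σ r)))).aestronglyMeasurable)
    0 0 1 (fun z => ?_)
  have h1 : |z * (z * Vk (W σ r z))| ≤ z ^ 2 := by
    rw [abs_mul, abs_mul]
    calc |z| * (|z| * |Vk (W σ r z)|) ≤ |z| * (|z| * 1) := by
          refine mul_le_mul_of_nonneg_left ?_ (abs_nonneg z)
          exact mul_le_mul_of_nonneg_left (hb _) (abs_nonneg z)
      _ = z ^ 2 := by rw [mul_one, ← sq_abs]; ring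
  nlinarith [abs_nonneg z]

/-- the z-derivative of `z ↦ Vk (W σ r z)` -/
lemma hasDerivAt_VkW_z (σ r : ℝ) (Vk Vk1 : ℝ → ℝ) (hD : ∀ x, HasDerivAt Vk (Vk1 x) x) (z : ℝ) :
    HasDerivAt (fun z => Vk (W σ r z)) (Vk1 (W σ r z) * (σ * Real.sqrt r)) z := by
  have hWz : HasDerivAt (fun z => W σ r z) (σ * Real.sqrt r) z := by
    have h0 := ((hasDerivAt_id z).const_mul (σ * Real.sqrt r)).const_add r
    exact h0.congr_deriv (by simp)
  have := (hD (W σ r z)).comp z hWz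
  simpa [Function.comp_def] using this

/-- Stein identity for `Vk ∘ W` -/
lemma ibp_VkW (σ : ℝ) (hσ : 0 ≤ σ) {r : ℝ} (hr : 0 ≤ r) (Vk Vk1 : ℝ → ℝ)
    (hD : ∀ x, HasDerivAt Vk (Vk1 x) x) (hc1 : Continuous Vk1)
    (hbk : ∀ x, |Vk x| ≤ 1) (hbk1 : ∀ x, |Vk1 x| ≤ 1) :
    ∫ z, z * Vk (W σ r z) ∂γ = σ * Real.sqrt r * ∫ z, Vk1 (W σ r z) ∂γ := by
  have hsnn : 0 ≤ σ * Real.sqrt r := by positivity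
  have h := gauss_ibp (fun z => Vk (W σ r z))
    (fun z => Vk1 (W σ r z) * (σ * Real.sqrt r))
    (fun z => hasDerivAt_VkW_z σ r Vk Vk1 hD z)
    ((hc1.comp (continuous_W σ r)).mul continuous_const)
    (1 + σ * Real.sqrt r) 1
    (fun z => by
      have := hbk (W σ r z)
      have := abs_nonneg z
      linarith)
    (fun z => by
      rw [abs_mul, abs_of_nonneg hsnn]
      have h1 : |Vk1 (W σ r z)| * (σ * Real.sqrt r) ≤ 1 * (σ * Real.sqrt r) :=
        mul_le_mul_of_nonneg_right (hbk1 _) hsnn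
      have := abs_nonneg z
      linarith)
  rw [h, integral_mul_const]
  ring

/-- Stein identity for `z * V2 ∘ W` -/
lemma ibp_zV2W (σ : ℝ) (hσ : 0 ≤ σ) {r : ℝ} (hr : 0 ≤ r) :
    ∫ z, z * (z * V2 (W σ r z)) ∂γ
      = (∫ z, V2 (W σ r z) ∂γ) + (σ * Real.sqrt r) ^ 2 * ∫ z, V4 (W σ r z) ∂γ := by
  have hsnn : 0 ≤ σ * Real.sqrt r := by positivity
  have h := gauss_ibp (fun z => z * V2 (W σ r z))
    (fun z => V2 (W σ r z) + z * (V3 (W σ r z) * (σ * Real.sqrt r)))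
    (fun z => by
      have := (hasDerivAt_id z).mul (hasDerivAt_VkW_z σ r V2 V3 hasDerivAt_V2 z)
      exact this.congr_deriv (by simp only [id_eq]; ring))
    (by
      have : Continuous fun z => V3 (W σ r z) * (σ * Real.sqrt r) :=
        (continuous_V3.comp (continuous_W σ r)).mul continuous_const
      exact (continuous_V2.comp (continuous_W σ r)).add (continuous_id.mul this))
    (1 + σ * Real.sqrt r) (1 + σ * Real.sqrt r)
    (fun z => by
      rw [abs_mul]
      have h1 : |z| * |V2 (W σ r z)| ≤ |z| * 1 :=
        mul_le_mul_of_nonneg_left (abs_V2_le _) (abs_nonneg z)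
      have := abs_nonneg z
      nlinarith)
    (fun z => by
      have h0 := abs_add_le (V2 (W σ r z)) (z * (V3 (W σ r z) * (σ * Real.sqrt r)))
      have h1 : |z * (V3 (W σ r z) * (σ * Real.sqrt r))| ≤ |z| * (σ * Real.sqrt r) := by
        rw [abs_mul, abs_mul, abs_of_nonneg hsnn]
        have := mul_le_mul_of_nonneg_right (abs_V3_le (W σ r z)) hsnn
        have := abs_nonneg z
        nlinarith [abs_nonneg (V3 (W σ r z))]
      have h2 := abs_V2_le (W σ r z)
      have := abs_nonneg z
      nlinarith)
  rw [h]
  have hint1 : Integrable (fun z => V2 (W σ r z)) γ :=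
    int_VkW σ r V2 continuous_V2 abs_V2_le
  have hint2 : Integrable (fun z => z * (V3 (W σ r z) * (σ * Real.sqrt r))) γ := by
    have := (int_zVkW σ r V3 continuous_V3 abs_V3_le).mul_const (σ * Real.sqrt r)
    exact this.congr (ae_of_all _ fun z => by ring)
  rw [integral_add hint1 hint2]
  congr 1
  have : ∀ z : ℝ, z * (V3 (W σ r z) * (σ * Real.sqrt r))
      = z * V3 (W σ r z) * (σ * Real.sqrt r) := fun z => by ring
  rw [integral_congr_ae (ae_of_all _ this), integral_mul_const,
    ibp_VkW σ hσ hr V3 V4 hasDerivAt_V3 continuous_V4 abs_V3_le abs_V4_le]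
  ring


/-- differentiation under the integral: first derivative of φ -/
lemma hasDerivAt_phi (σ : ℝ) (hσ : 0 ≤ σ) {r₀ : ℝ} (hr : 0 < r₀) :
    HasDerivAt (phi σ) (D1 σ r₀) r₀ := by
  have hε : (0:ℝ) < r₀ / 2 := by positivity
  set c := σ / (2 * Real.sqrt (r₀ / 2)) with hc_def
  have hc0 : 0 ≤ c := by positivity
  have key := hasDerivAt_integral_of_dominated_loc_of_deriv_le (μ := γ) (𝕜 := ℝ)
    (F := fun r z => V0 (W σ r z))
    (F' := fun r z => V1 (W σ r z) * (1 + σ / (2 * Real.sqrt r) * z))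
    (x₀ := r₀) (bound := fun z => 1 + c * |z| + 0 * z ^ 2) (s := Metric.ball r₀ (r₀ / 2)) (Metric.ball_mem_nhds r₀ hε)
    (Filter.Eventually.of_forall fun x =>
      ((continuous_V0.comp (continuous_W σ x)).aestronglyMeasurable))
    (by
      refine integrable_gauss_of_le _
        ((continuous_V0.comp (continuous_W σ r₀)).aestronglyMeasurable)
        (Real.log 2 + r₀) (σ * Real.sqrt r₀) 0 (fun z => ?_)
      have h1 := abs_V0_le (W σ r₀ z)
      have h2 : |W σ r₀ z| ≤ r₀ + σ * Real.sqrt r₀ * |z| := by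
        have := abs_add_le (r₀ : ℝ) (σ * Real.sqrt r₀ * z)
        have h3 : |σ * Real.sqrt r₀ * z| = σ * Real.sqrt r₀ * |z| := by
          rw [abs_mul, abs_of_nonneg (by positivity : (0:ℝ) ≤ σ * Real.sqrt r₀)]
        calc |W σ r₀ z| = |r₀ + σ * Real.sqrt r₀ * z| := rfl
          _ ≤ |r₀| + |σ * Real.sqrt r₀ * z| := abs_add_le _ _
          _ = r₀ + σ * Real.sqrt r₀ * |z| := by rw [abs_of_pos hr, h3]
      nlinarith [sq_nonneg z])
    ((continuous_V1.comp (continuous_W σ r₀)).mul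
      (continuous_const.add ((continuous_const.mul continuous_id)))).aestronglyMeasurable
    (ae_of_all _ fun z x hx => by
      obtain ⟨hx1, hx2⟩ := mem_ball_facts hr hx
      have hsx : Real.sqrt (r₀ / 2) ≤ Real.sqrt x := Real.sqrt_le_sqrt hx1.le
      have hs2 : 0 < Real.sqrt (r₀ / 2) := Real.sqrt_pos.2 hε
      have hax : σ / (2 * Real.sqrt x) ≤ c := by
        rw [hc_def]
        apply div_le_div_of_nonneg_left hσ (by positivity)
        linarith
      have hax0 : 0 ≤ σ / (2 * Real.sqrt x) := by positivity
      rw [Real.norm_eq_abs, abs_mul]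
      have h1 : |V1 (W σ x z)| ≤ 1 := abs_V1_le _
      have h2 : |1 + σ / (2 * Real.sqrt x) * z| ≤ 1 + c * |z| := by
        calc |1 + σ / (2 * Real.sqrt x) * z| ≤ 1 + |σ / (2 * Real.sqrt x) * z| := by
              have := abs_add_le (1:ℝ) (σ / (2 * Real.sqrt x) * z)
              simpa using this
          _ = 1 + σ / (2 * Real.sqrt x) * |z| := by rw [abs_mul, abs_of_nonneg hax0]
          _ ≤ 1 + c * |z| := by
              have := mul_le_mul_of_nonneg_right hax (abs_nonneg z)
              linarith
      have h3 : (0:ℝ) ≤ |1 + σ / (2 * Real.sqrt x) * z| := abs_nonneg _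
      nlinarith [abs_nonneg (V1 (W σ x z)), sq_nonneg z])
    (integrable_quad_gauss 1 c 0)
    (ae_of_all _ fun z x hx => hasDerivAt_V0W σ z (mem_ball_facts hr hx).2)
  exact key.2


set_option maxHeartbeats 1000000 in
/-- differentiation under the integral: second derivative (raw form) -/
lemma hasDerivAt_D1 (σ : ℝ) (hσ : 0 ≤ σ) {r₀ : ℝ} (hr : 0 < r₀) :
    HasDerivAt (D1 σ)
      (∫ z, (V2 (W σ r₀ z) * (1 + σ / (2 * Real.sqrt r₀) * z) ^ 2
        + V1 (W σ r₀ z) * (-(σ * z) / (4 * r₀ * Real.sqrt r₀))) ∂γ) r₀ := by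
  have hε : (0:ℝ) < r₀ / 2 := by positivity
  set c := σ / (2 * Real.sqrt (r₀ / 2)) with hc_def
  set c2 := σ / (4 * (r₀ / 2) * Real.sqrt (r₀ / 2)) with hc2_def
  have hc0 : 0 ≤ c := by positivity
  have hc20 : 0 ≤ c2 := by positivity
  have hs2 : 0 < Real.sqrt (r₀ / 2) := Real.sqrt_pos.2 hε
  have key := hasDerivAt_integral_of_dominated_loc_of_deriv_le (μ := γ) (𝕜 := ℝ)
    (F := fun r z => V1 (W σ r z) * (1 + σ / (2 * Real.sqrt r) * z))
    (F' := fun r z => V2 (W σ r z) * (1 + σ / (2 * Real.sqrt r) * z) ^ 2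
        + V1 (W σ r z) * (-(σ * z) / (4 * r * Real.sqrt r)))
    (x₀ := r₀) (bound := fun z => 1 + (2 * c + c2) * |z| + c ^ 2 * z ^ 2) (s := Metric.ball r₀ (r₀ / 2)) (Metric.ball_mem_nhds r₀ hε)
    (Filter.Eventually.of_forall fun x =>
      ((continuous_V1.comp (continuous_W σ x)).mul
        (continuous_const.add (continuous_const.mul continuous_id))).aestronglyMeasurable)
    (by
      refine integrable_gauss_of_le _
        ((continuous_V1.comp (continuous_W σ r₀)).mul
          (continuous_const.add (continuous_const.mul continuous_id))).aestronglyMeasurable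
        1 (σ / (2 * Real.sqrt r₀)) 0 (fun z => ?_)
      have ha0 : (0:ℝ) ≤ σ / (2 * Real.sqrt r₀) := by positivity
      rw [abs_mul]
      have h1 := abs_V1_le (W σ r₀ z)
      have h2 : |1 + σ / (2 * Real.sqrt r₀) * z| ≤ 1 + σ / (2 * Real.sqrt r₀) * |z| := by
        calc |1 + σ / (2 * Real.sqrt r₀) * z| ≤ 1 + |σ / (2 * Real.sqrt r₀) * z| := by
              simpa using abs_add_le (1:ℝ) (σ / (2 * Real.sqrt r₀) * z)
          _ = 1 + σ / (2 * Real.sqrt r₀) * |z| := by rw [abs_mul, abs_of_nonneg ha0]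
      nlinarith [abs_nonneg (V1 (W σ r₀ z)), abs_nonneg (1 + σ / (2 * Real.sqrt r₀) * z),
        sq_nonneg z, abs_nonneg z])
    (by
      apply Continuous.aestronglyMeasurable
      refine ((continuous_V2.comp (continuous_W σ r₀)).mul
        ((continuous_const.add (continuous_const.mul continuous_id)).pow 2)).add
        ((continuous_V1.comp (continuous_W σ r₀)).mul
          ((continuous_const.mul continuous_id).neg.div_const _)))
    (ae_of_all _ fun z x hx => by
      obtain ⟨hx1, hx2⟩ := mem_ball_facts hr hx
      have hsx : Real.sqrt (r₀ / 2) ≤ Real.sqrt x := Real.sqrt_le_sqrt hx1.le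
      have hsxp : 0 < Real.sqrt x := Real.sqrt_pos.2 hx2
      have hax : σ / (2 * Real.sqrt x) ≤ c := by
        rw [hc_def]
        apply div_le_div_of_nonneg_left hσ (by positivity)
        linarith
      have hax0 : 0 ≤ σ / (2 * Real.sqrt x) := by positivity
      have hbx : σ / (4 * x * Real.sqrt x) ≤ c2 := by
        rw [hc2_def]
        apply div_le_div_of_nonneg_left hσ (by positivity)
        nlinarith
      have hbx0 : 0 ≤ σ / (4 * x * Real.sqrt x) := by positivity
      rw [Real.norm_eq_abs]
      have habs := abs_add_le (V2 (W σ x z) * (1 + σ / (2 * Real.sqrt x) * z) ^ 2)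
        (V1 (W σ x z) * (-(σ * z) / (4 * x * Real.sqrt x)))
      have h1 : |V2 (W σ x z) * (1 + σ / (2 * Real.sqrt x) * z) ^ 2|
          ≤ (1 + c * |z|) ^ 2 := by
        rw [abs_mul, abs_pow]
        have hz : |1 + σ / (2 * Real.sqrt x) * z| ≤ 1 + c * |z| := by
          calc |1 + σ / (2 * Real.sqrt x) * z| ≤ 1 + |σ / (2 * Real.sqrt x) * z| := by
                simpa using abs_add_le (1:ℝ) (σ / (2 * Real.sqrt x) * z)
            _ = 1 + σ / (2 * Real.sqrt x) * |z| := by rw [abs_mul, abs_of_nonneg hax0]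
            _ ≤ 1 + c * |z| := by nlinarith [abs_nonneg z]
        have h2 := abs_V2_le (W σ x z)
        nlinarith [abs_nonneg (1 + σ / (2 * Real.sqrt x) * z),
          abs_nonneg (V2 (W σ x z)), sq_nonneg (|1 + σ / (2 * Real.sqrt x) * z|)]
      have h2 : |V1 (W σ x z) * (-(σ * z) / (4 * x * Real.sqrt x))| ≤ c2 * |z| := by
        rw [abs_mul]
        have he : |(-(σ * z)) / (4 * x * Real.sqrt x)| = σ / (4 * x * Real.sqrt x) * |z| := by
          rw [abs_div, abs_neg, abs_mul, abs_of_nonneg hσ,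
            abs_of_pos (by positivity : (0:ℝ) < 4 * x * Real.sqrt x)]
          ring
        rw [he]
        have h3 := abs_V1_le (W σ x z)
        have h4 : σ / (4 * x * Real.sqrt x) * |z| ≤ c2 * |z| :=
          mul_le_mul_of_nonneg_right hbx (abs_nonneg z)
        nlinarith [abs_nonneg (V1 (W σ x z)), abs_nonneg z,
          mul_nonneg hbx0 (abs_nonneg z)]
      have hsq : (1 + c * |z|) ^ 2 = 1 + 2 * c * |z| + c ^ 2 * z ^ 2 := by
        rw [← sq_abs z]; ring
      nlinarith [abs_nonneg z])
    (integrable_quad_gauss 1 (2 * c + c2) (c ^ 2))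
    (ae_of_all _ fun z x hx => hasDerivAt_D1int σ z (mem_ball_facts hr hx).2)
  exact key.2


lemma D1_eq (σ : ℝ) (hσ : 0 ≤ σ) {r : ℝ} (hr : 0 < r) :
    D1 σ r = (∫ z, V1 (W σ r z) ∂γ) + σ ^ 2 / 2 * ∫ z, V2 (W σ r z) ∂γ := by
  have hs0 : Real.sqrt r ≠ 0 := (Real.sqrt_pos.2 hr).ne'
  have hsq : Real.sqrt r ^ 2 = r := Real.sq_sqrt hr.le
  have i1 : Integrable (fun z => V1 (W σ r z)) γ := int_VkW σ r V1 continuous_V1 abs_V1_le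
  have i2 : Integrable (fun z => σ / (2 * Real.sqrt r) * (z * V1 (W σ r z))) γ :=
    (int_zVkW σ r V1 continuous_V1 abs_V1_le).const_mul _
  have hpt : ∀ z : ℝ, V1 (W σ r z) * (1 + σ / (2 * Real.sqrt r) * z)
      = V1 (W σ r z) + σ / (2 * Real.sqrt r) * (z * V1 (W σ r z)) := fun z => by ring
  rw [D1, integral_congr_ae (ae_of_all _ hpt), integral_add i1 i2, integral_const_mul,
    ibp_VkW σ hσ hr.le V1 V2 hasDerivAt_V1 continuous_V2 abs_V1_le abs_V2_le]
  have : σ / (2 * Real.sqrt r) * (σ * Real.sqrt r * ∫ z, V2 (W σ r z) ∂γ)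
      = σ ^ 2 / 2 * ∫ z, V2 (W σ r z) ∂γ := by
    field_simp
  rw [this]

lemma D2_eq (σ : ℝ) (hσ : 0 ≤ σ) {r : ℝ} (hr : 0 < r) :
    (∫ z, (V2 (W σ r z) * (1 + σ / (2 * Real.sqrt r) * z) ^ 2
        + V1 (W σ r z) * (-(σ * z) / (4 * r * Real.sqrt r))) ∂γ) = D2I σ r := by
  have hs0 : Real.sqrt r ≠ 0 := (Real.sqrt_pos.2 hr).ne'
  have hsq : Real.sqrt r ^ 2 = r := Real.sq_sqrt hr.le
  set a := σ / (2 * Real.sqrt r) with ha_def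
  set b := σ / (4 * r * Real.sqrt r) with hb_def
  have i1 : Integrable (fun z => V2 (W σ r z)) γ := int_VkW σ r V2 continuous_V2 abs_V2_le
  have i2 : Integrable (fun z => (2 * a) * (z * V2 (W σ r z))) γ :=
    (int_zVkW σ r V2 continuous_V2 abs_V2_le).const_mul _
  have i3 : Integrable (fun z => a ^ 2 * (z * (z * V2 (W σ r z)))) γ :=
    (int_zzVkW σ r V2 continuous_V2 abs_V2_le).const_mul _
  have i4 : Integrable (fun z => (-b) * (z * V1 (W σ r z))) γ :=
    (int_zVkW σ r V1 continuous_V1 abs_V1_le).const_mul _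
  have hpt : ∀ z : ℝ, V2 (W σ r z) * (1 + a * z) ^ 2 + V1 (W σ r z) * (-(σ * z) / (4 * r * Real.sqrt r))
      = V2 (W σ r z) + (2 * a) * (z * V2 (W σ r z)) + a ^ 2 * (z * (z * V2 (W σ r z)))
        + (-b) * (z * V1 (W σ r z)) := fun z => by
    rw [hb_def]
    have h4 : (4:ℝ) * r * Real.sqrt r ≠ 0 := by positivity
    field_simp
    ring
  rw [integral_congr_ae (ae_of_all _ hpt),
    integral_add (f := fun z => V2 (W σ r z) + (2 * a) * (z * V2 (W σ r z))
      + a ^ 2 * (z * (z * V2 (W σ r z)))) ((i1.add i2).add i3) i4,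
    integral_add (f := fun z => V2 (W σ r z) + (2 * a) * (z * V2 (W σ r z)))
      (i1.add i2) i3, integral_add i1 i2,
    integral_const_mul, integral_const_mul, integral_const_mul,
    ibp_VkW σ hσ hr.le V1 V2 hasDerivAt_V1 continuous_V2 abs_V1_le abs_V2_le,
    ibp_VkW σ hσ hr.le V2 V3 hasDerivAt_V2 continuous_V3 abs_V2_le abs_V3_le,
    ibp_zV2W σ hσ hr.le, D2I]
  have i5 : Integrable (fun z => σ ^ 2 * V3 (W σ r z)) γ :=
    (int_VkW σ r V3 continuous_V3 abs_V3_le).const_mul _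
  have i6 : Integrable (fun z => σ ^ 4 / 4 * V4 (W σ r z)) γ :=
    (int_VkW σ r V4 continuous_V4 abs_V4_le).const_mul _
  rw [integral_add (f := fun z => V2 (W σ r z) + σ ^ 2 * V3 (W σ r z)) (i1.add i5) i6,
    integral_add i1 i5, integral_const_mul, integral_const_mul]
  set X := ∫ z, V2 (W σ r z) ∂γ
  set Y := ∫ z, V3 (W σ r z) ∂γ
  set Z := ∫ z, V4 (W σ r z) ∂γ
  have h4 : Real.sqrt r ^ 4 = r ^ 2 := by
    rw [show Real.sqrt r ^ 4 = (Real.sqrt r ^ 2) ^ 2 by ring, hsq]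
  rw [ha_def, hb_def]
  field_simp
  ring_nf
  rw [hsq]
  ring

lemma D2I_pos (σ : ℝ) (hσ : 0 ≤ σ) (hσ2 : σ ^ 2 < -4 + 2 * Real.sqrt 6) (r : ℝ) :
    0 < D2I σ r := by
  set f := fun z => V2 (W σ r z) + σ ^ 2 * V3 (W σ r z) + σ ^ 4 / 4 * V4 (W σ r z) with hf
  have hfpos : ∀ z, 0 < f z := by
    intro z
    have := key_pos (c := σ ^ 2) (by positivity) hσ2 (W σ r z)
    have h4 : (σ ^ 2) ^ 2 / 4 = σ ^ 4 / 4 := by ring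
    rw [h4] at this
    exact this
  have hint : Integrable f γ := by
    refine integrable_gauss_of_le _ ?_ (1 + σ ^ 2 + σ ^ 4 / 4) 0 0 (fun z => ?_)
    · refine Continuous.aestronglyMeasurable ?_
      refine ((continuous_V2.comp (continuous_W σ r)).add
        (continuous_const.mul (continuous_V3.comp (continuous_W σ r)))).add
        (continuous_const.mul (continuous_V4.comp (continuous_W σ r)))
    · have h2 := abs_V2_le (W σ r z)
      have h3 := abs_V3_le (W σ r z)
      have h4 := abs_V4_le (W σ r z)
      have e1 := abs_add_three (V2 (W σ r z)) (σ ^ 2 * V3 (W σ r z)) (σ ^ 4 / 4 * V4 (W σ r z))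
      rw [abs_mul, abs_mul, abs_of_nonneg (by positivity : (0:ℝ) ≤ σ ^ 2),
        abs_of_nonneg (by positivity : (0:ℝ) ≤ σ ^ 4 / 4)] at e1
      have m3 : σ ^ 2 * |V3 (W σ r z)| ≤ σ ^ 2 * 1 :=
        mul_le_mul_of_nonneg_left h3 (by positivity)
      have m4 : σ ^ 4 / 4 * |V4 (W σ r z)| ≤ σ ^ 4 / 4 * 1 :=
        mul_le_mul_of_nonneg_left h4 (by positivity)
      nlinarith [abs_nonneg z, sq_nonneg z]
  have hsupp : Function.support f = Set.univ :=
    Set.eq_univ_iff_forall.2 fun z => (hfpos z).ne'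
  have := (integral_pos_iff_support_of_nonneg_ae
    (ae_of_all _ fun z => (hfpos z).le) hint).2
  rw [hsupp] at this
  exact this (by simp)


lemma hasDerivAt_D1' (σ : ℝ) (hσ : 0 ≤ σ) {r : ℝ} (hr : 0 < r) :
    HasDerivAt (D1 σ) (D2I σ r) r := by
  have := hasDerivAt_D1 σ hσ hr
  rwa [D2_eq σ hσ hr] at this

lemma continuousOn_phi (σ : ℝ) (hσ : 0 ≤ σ) : ContinuousOn (phi σ) (Ici 0) := by
  intro r₀ hr₀
  have hr₀0 : (0:ℝ) ≤ r₀ := hr₀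
  refine continuousWithinAt_of_dominated (μ := γ)
    (bound := fun z => Real.log 2 + (r₀ + 1) + σ * Real.sqrt (r₀ + 1) * |z|) ?_ ?_ ?_ ?_
  · exact Filter.Eventually.of_forall fun x =>
      (continuous_V0.comp (continuous_W σ x)).aestronglyMeasurable
  · have hev : ∀ᶠ x in 𝓝[Ici 0] r₀, x ∈ Ici (0:ℝ) ∧ x < r₀ + 1 := by
      refine Filter.Eventually.and self_mem_nhdsWithin ?_
      exact Filter.Eventually.filter_mono nhdsWithin_le_nhds
        (eventually_of_mem (Iio_mem_nhds (by linarith)) fun x hx => hx)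
    filter_upwards [hev] with x hx
    refine ae_of_all _ fun z => ?_
    obtain ⟨hx0, hx1⟩ := hx
    have hx0' : (0:ℝ) ≤ x := hx0
    have hsx : Real.sqrt x ≤ Real.sqrt (r₀ + 1) := Real.sqrt_le_sqrt (by linarith)
    have hW : |W σ x z| ≤ x + σ * Real.sqrt x * |z| := by
      calc |W σ x z| = |x + σ * Real.sqrt x * z| := rfl
        _ ≤ |x| + |σ * Real.sqrt x * z| := abs_add_le _ _
        _ = x + σ * Real.sqrt x * |z| := by
            rw [abs_of_nonneg hx0', abs_mul, abs_of_nonneg (by positivity : (0:ℝ) ≤ σ * Real.sqrt x)]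
    have h0 := abs_V0_le (W σ x z)
    rw [Real.norm_eq_abs]
    have hm : σ * Real.sqrt x * |z| ≤ σ * Real.sqrt (r₀ + 1) * |z| := by
      have : σ * Real.sqrt x ≤ σ * Real.sqrt (r₀ + 1) := mul_le_mul_of_nonneg_left hsx hσ
      exact mul_le_mul_of_nonneg_right this (abs_nonneg z)
    linarith
  · have := integrable_quad_gauss (Real.log 2 + (r₀ + 1)) (σ * Real.sqrt (r₀ + 1)) 0
    refine this.congr (ae_of_all _ fun z => by ring)
  · refine ae_of_all _ fun z => ?_
    exact ((continuous_V0.comp (continuous_W_r σ z)).continuousAt).continuousWithinAt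

lemma phi_zero (σ : ℝ) : phi σ 0 = Real.log 2 := by
  have h : ∀ z : ℝ, V0 (W σ 0 z) = Real.log 2 := by
    intro z
    have : W σ 0 z = 0 := by simp [W]
    rw [this, V0]
    norm_num
  rw [phi, integral_congr_ae (ae_of_all _ h), integral_const]
  simp

lemma phi_nonneg (σ : ℝ) (r : ℝ) : 0 ≤ phi σ r :=
  integral_nonneg fun z => V0_nonneg _

lemma tendsto_D1_zero (σ : ℝ) (hσ : 0 ≤ σ) :
    Tendsto (D1 σ) (𝓝[>] (0:ℝ)) (𝓝 (-(1/2) + σ ^ 2 / 8)) := by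
  have hW0 : ∀ z : ℝ, Tendsto (fun r => W σ r z) (𝓝[>] (0:ℝ)) (𝓝 0) := by
    intro z
    have hc : ContinuousAt (fun r => W σ r z) 0 := (continuous_W_r σ z).continuousAt
    have h2 := hc.tendsto.mono_left (nhdsWithin_le_nhds (s := Set.Ioi (0:ℝ)))
    simpa [W] using h2
  have h1 : Tendsto (fun r => ∫ z, V1 (W σ r z) ∂γ) (𝓝[>] (0:ℝ)) (𝓝 (-(1/2))) := by
    have key := tendsto_integral_filter_of_dominated_convergence (μ := γ)
      (l := 𝓝[>] (0:ℝ)) (F := fun r z => V1 (W σ r z)) (f := fun _ => -(1/2 : ℝ))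
      (bound := fun _ => (1:ℝ))
      (Filter.Eventually.of_forall fun r =>
        (continuous_V1.comp (continuous_W σ r)).aestronglyMeasurable)
      (Filter.Eventually.of_forall fun r => ae_of_all _ fun z => by
        rw [Real.norm_eq_abs]; exact abs_V1_le _)
      (integrable_const 1)
      (ae_of_all _ fun z => by
        have := (continuous_V1.tendsto 0).comp (hW0 z)
        have hV10 : V1 0 = -(1/2) := by rw [V1]; norm_num
        rw [hV10] at this
        exact this)
    simpa using key
  have h2 : Tendsto (fun r => ∫ z, V2 (W σ r z) ∂γ) (𝓝[>] (0:ℝ)) (𝓝 (1/4)) := by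
    have key := tendsto_integral_filter_of_dominated_convergence (μ := γ)
      (l := 𝓝[>] (0:ℝ)) (F := fun r z => V2 (W σ r z)) (f := fun _ => (1/4 : ℝ))
      (bound := fun _ => (1:ℝ))
      (Filter.Eventually.of_forall fun r =>
        (continuous_V2.comp (continuous_W σ r)).aestronglyMeasurable)
      (Filter.Eventually.of_forall fun r => ae_of_all _ fun z => by
        rw [Real.norm_eq_abs]; exact abs_V2_le _)
      (integrable_const 1)
      (ae_of_all _ fun z => by
        have := (continuous_V2.tendsto 0).comp (hW0 z)
        have hV20 : V2 0 = 1/4 := by rw [V2]; norm_num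
        rw [hV20] at this
        exact this)
    simpa using key
  have hcomb := h1.add (h2.const_mul (σ ^ 2 / 2))
  have hval : -(1/2 : ℝ) + σ ^ 2 / 2 * (1/4) = -(1/2) + σ ^ 2 / 8 := by ring
  rw [hval] at hcomb
  refine Tendsto.congr' ?_ hcomb
  filter_upwards [self_mem_nhdsWithin] with r hr
  exact (D1_eq σ hσ hr).symm


end Stmt2Aux

end

open Stmt2Aux

/-- for the logistic loss `V(x) = log(1 + e^{-x})`, `σ ≥ 0` with
`σ² < -4 + 2√6` and `0 < β < 1/2 - σ²/8`, the function
`h(r) = E[V(r + σ√r Z)] + βr` on `[0,∞)` has a unique minimizer `r⋆ > 0`. -/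
theorem stmt2 (σ β : ℝ) (hσ : 0 ≤ σ) (hσ2 : σ ^ 2 < -4 + 2 * Real.sqrt 6)
    (hβ0 : 0 < β) (hβ1 : β < 1 / 2 - σ ^ 2 / 8)
    (h : ℝ → ℝ)
    (hh : ∀ r, 0 ≤ r → h r =
      (∫ z, Real.log (1 + Real.exp (-(r + σ * Real.sqrt r * z)))
        ∂(gaussianReal 0 1)) + β * r) :
    ∃ rs : ℝ, 0 < rs ∧ (∀ r, 0 ≤ r → h rs ≤ h r) ∧
      ∀ r, 0 ≤ r → (∀ r', 0 ≤ r' → h r ≤ h r') → r = rs := by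
  classical
  set g : ℝ → ℝ := fun r => phi σ r + β * r with hg_def
  have hgh : ∀ r, 0 ≤ r → h r = g r := by
    intro r hr
    rw [hh r hr, hg_def]
    rfl
  have hgc : ContinuousOn g (Set.Ici 0) :=
    (continuousOn_phi σ hσ).add (continuous_const.mul continuous_id).continuousOn
  have hgd : ∀ r : ℝ, 0 < r → HasDerivAt g (D1 σ r + β) r := by
    intro r hr
    have h1 := hasDerivAt_phi σ hσ hr
    have h2 : HasDerivAt (fun x : ℝ => β * x) β r := by
      simpa using (hasDerivAt_id r).const_mul β
    exact h1.add h2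
  have hconv : StrictConvexOn ℝ (Set.Ici 0) g := by
    apply strictConvexOn_of_deriv2_pos (convex_Ici 0) hgc
    intro x hx
    rw [interior_Ici] at hx
    have hx0 : 0 < x := hx
    have hev : ∀ᶠ y in 𝓝 x, 0 < y :=
      eventually_of_mem (Ioi_mem_nhds hx0) fun y hy => hy
    have hderiv_eq : deriv g =ᶠ[𝓝 x] fun y => D1 σ y + β := by
      filter_upwards [hev] with y hy
      exact (hgd y hy).deriv
    have hD2 : HasDerivAt (fun y => D1 σ y + β) (D2I σ x) x :=
      (hasDerivAt_D1' σ hσ hx0).add_const β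
    have hde : deriv (deriv g) x = D2I σ x := by
      rw [Filter.EventuallyEq.deriv_eq hderiv_eq]
      exact hD2.deriv
    show 0 < deriv (deriv g) x
    rw [hde]
    exact D2I_pos σ hσ hσ2 x
  have hg0 : g 0 = Real.log 2 := by
    rw [hg_def]
    simp [phi_zero σ]
  have hglb : ∀ r, 0 ≤ r → β * r ≤ g r := by
    intro r hr
    rw [hg_def]
    have := phi_nonneg σ r
    simp only []
    linarith
  -- a point with smaller value than 0
  have hL : -(1/2 : ℝ) + σ ^ 2 / 8 + β < 0 := by linarith
  have hev0 : ∀ᶠ r in 𝓝[>] (0:ℝ), D1 σ r + β < 0 := by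
    have ht := (tendsto_D1_zero σ hσ).add_const β
    exact ht.eventually_lt_const hL
  obtain ⟨u, hu, hsub⟩ := mem_nhdsGT_iff_exists_Ioo_subset.1 hev0
  have hu0 : (0:ℝ) < u := hu
  set δ := min u 1 with hδ_def
  have hδ0 : 0 < δ := lt_min hu0 (by norm_num)
  have hδ1 : δ ≤ 1 := min_le_right _ _
  have hanti : StrictAntiOn g (Set.Icc 0 δ) := by
    apply strictAntiOn_of_deriv_neg (convex_Icc 0 δ)
      (hgc.mono (fun x hx => hx.1))
    intro x hx
    rw [interior_Icc] at hx
    rw [(hgd x hx.1).deriv]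
    exact hsub ⟨hx.1, lt_of_lt_of_le hx.2 (min_le_left _ _)⟩
  set r1 := δ / 2 with hr1_def
  have hr10 : 0 < r1 := by positivity
  have hr11 : r1 ≤ 1 := by
    rw [hr1_def]; linarith
  have hr1lt : g r1 < g 0 :=
    hanti ⟨le_refl 0, hδ0.le⟩ ⟨hr10.le, by rw [hr1_def]; linarith⟩ hr10
  -- existence of a minimizer on [0, R]
  set R := Real.log 2 / β + 1 with hR_def
  have hlog2 : 0 < Real.log 2 := Real.log_pos (by norm_num)
  have hR1 : 1 ≤ R := by
    have : 0 < Real.log 2 / β := div_pos hlog2 hβ0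
    rw [hR_def]; linarith
  obtain ⟨rs, hrs_mem, hrs_min⟩ := isCompact_Icc.exists_isMinOn
    (Set.nonempty_Icc.2 (by linarith : (0:ℝ) ≤ R))
    (hgc.mono (fun x hx => hx.1))
  have hmin : ∀ x ∈ Set.Icc (0:ℝ) R, g rs ≤ g x := fun x hx => hrs_min hx
  have hglobal : ∀ r, 0 ≤ r → g rs ≤ g r := by
    intro r hr
    by_cases hrR : r ≤ R
    · exact hmin r ⟨hr, hrR⟩
    · push_neg at hrR
      have h1 : g rs ≤ g 0 := hmin 0 ⟨le_refl 0, by linarith⟩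
      have h2 : Real.log 2 < β * r := by
        have hβR : β * R = Real.log 2 + β := by
          rw [hR_def]; field_simp
        have : β * R < β * r := mul_lt_mul_of_pos_left hrR hβ0
        linarith
      have h3 := hglb r hr
      rw [hg0] at h1
      linarith
  have hrs0 : 0 < rs := by
    rcases eq_or_lt_of_le hrs_mem.1 with heq | hlt
    · exfalso
      have h1 : g rs ≤ g r1 := hmin r1 ⟨hr10.le, by linarith⟩
      rw [← heq] at h1
      linarith
    · exact hlt
  refine ⟨rs, hrs0, ?_, ?_⟩
  · intro r hr
    rw [hgh r hr, hgh rs hrs_mem.1]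
    exact hglobal r hr
  · intro r hr hrmin
    by_contra hne
    have hle1 : g r ≤ g rs := by
      rw [← hgh r hr, ← hgh rs hrs_mem.1]
      exact hrmin rs hrs_mem.1
    have hle2 : g rs ≤ g r := hglobal r hr
    have heq : g r = g rs := le_antisymm hle1 hle2
    have hmem1 : r ∈ Set.Ici (0:ℝ) := hr
    have hmem2 : rs ∈ Set.Ici (0:ℝ) := hrs_mem.1
    have hstrict := hconv.2 hmem1 hmem2 hne (by norm_num : (0:ℝ) < 1/2)
      (by norm_num : (0:ℝ) < 1/2) (by norm_num)
    rw [smul_eq_mul, smul_eq_mul, smul_eq_mul, smul_eq_mul] at hstrict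
    have hmid0 : 0 ≤ (1/2 : ℝ) * r + (1/2) * rs := by positivity
    have := hglobal _ hmid0
    rw [heq] at hstrict
    linarith
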